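/- Let q be a power of a prime p and let ℓ ≥ 3 be a divisor of q − 1 (if q is even) or of (q − 1)/2 (if q is odd). Let x ∈ PSL(2, q) have order ℓ. Then the conjugacy class of x intersected with ⟨x⟩ equals {x, x⁻¹}. -/

import Mathlib

open Matrix Polynomial

namespace PSL2Aux

variable {F : Type*} [Field F]

/-- coefficients of `A^n` in the basis `1, A`. -/
def cc (t : F) : ℕ → F × F
  | 0 => (1, 0)
  | n+1 => (-(cc t n).2, (cc t n).1 + t * (cc t n).2)

lemma pow_rec {S : Type*} [Ring S] [Algebra F S] (t : F) (u : S)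
    (hu : u * u = algebraMap F S t * u - 1) (n : ℕ) :
    u ^ n = algebraMap F S (cc t n).1 + algebraMap F S (cc t n).2 * u := by
  induction n with
  | zero => simp [cc]
  | succ n ih =>
    rw [pow_succ, ih, cc]
    rw [mul_comm t (cc t n).2]
    simp only [map_neg, map_add, _root_.map_mul]
    rw [add_mul, mul_assoc, hu]
    rw [mul_sub, mul_one, add_mul, ← mul_assoc]
    abel

lemma ch2 (A : Matrix (Fin 2) (Fin 2) F) (h : det A = 1) :
    A * A = algebraMap F (Matrix (Fin 2) (Fin 2) F) (trace A) * A - 1 := by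
  rw [det_fin_two] at h
  ext i j
  fin_cases i <;> fin_cases j <;>
    simp [Algebra.algebraMap_eq_smul_one, smul_mul_assoc, mul_apply, Fin.sum_univ_two,
      trace_fin_two, Matrix.one_apply] <;> first | ring1 | linear_combination -h

lemma exists_conj_aux (A : Matrix (Fin 2) (Fin 2) F) (hdet : det A = 1) (L M : F)
    (hLM : L * M = 1) (hsum : L + M = trace A) (hne : L ≠ M) (hb : A 0 1 ≠ 0) :
    ∃ g : Matrix (Fin 2) (Fin 2) F, det g = 1 ∧ g * A = (trace A • 1 - A) * g := by
  set t := trace A with ht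
  have htr : t = A 0 0 + A 1 1 := trace_fin_two A
  have hdet2 : A 0 0 * A 1 1 - A 0 1 * A 1 0 = 1 := by rw [← det_fin_two]; exact hdet
  set P : Matrix (Fin 2) (Fin 2) F := !![A 0 1, A 0 1; L - A 0 0, M - A 0 0] with hPdef
  set D : Matrix (Fin 2) (Fin 2) F := !![L, 0; 0, M] with hDdef
  set J : Matrix (Fin 2) (Fin 2) F := !![0, 1; -1, 0] with hJdef
  have hM : M = t - L := by linear_combination hsum
  have hL2 : L * L = t * L - 1 := by linear_combination L * hM - hLM
  have hM2 : M * M = t * M - 1 := by linear_combination M * hM - hLM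
  have hP : det P = A 0 1 * (M - L) := by simp [hPdef, det_fin_two_of]; ring
  have hPne : det P ≠ 0 := by
    rw [hP]; exact mul_ne_zero hb (sub_ne_zero.mpr (Ne.symm hne))
  have hPunit : IsUnit (det P) := isUnit_iff_ne_zero.mpr hPne
  have hAP : A * P = P * D := by
    ext i j
    fin_cases i <;> fin_cases j <;>
      simp [hPdef, hDdef, mul_apply, Fin.sum_univ_two] <;>
      first
        | ring1
        | linear_combination -hdet2 - L * htr - hL2
        | linear_combination -hdet2 - M * htr - hM2
  have hJD : J * D = (t • 1 - D) * J := by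
    ext i j
    fin_cases i <;> fin_cases j <;>
      simp [hDdef, hJdef, mul_apply, Fin.sum_univ_two, Matrix.one_apply] <;>
      first | ring1 | linear_combination hM | linear_combination -hM
  have hJ1 : det J = 1 := by simp [hJdef, det_fin_two_of]
  refine ⟨P * J * P⁻¹, ?_, ?_⟩
  · rw [det_mul, det_mul, det_nonsing_inv, hJ1, mul_one, Ring.inverse_eq_inv',
      mul_inv_cancel₀ hPne]
  · have hPA : P⁻¹ * A = D * P⁻¹ := by
      calc P⁻¹ * A = P⁻¹ * (A * P * P⁻¹) := by
            rw [Matrix.mul_assoc A, Matrix.mul_nonsing_inv _ hPunit, Matrix.mul_one]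
        _ = P⁻¹ * (P * D * P⁻¹) := by rw [hAP]
        _ = P⁻¹ * P * (D * P⁻¹) := by simp only [Matrix.mul_assoc]
        _ = D * P⁻¹ := by rw [Matrix.nonsing_inv_mul _ hPunit, Matrix.one_mul]
    have step1 : P * J * P⁻¹ * A = P * ((t • 1 - D) * J * P⁻¹) := by
      calc P * J * P⁻¹ * A = P * (J * (P⁻¹ * A)) := by simp only [Matrix.mul_assoc]
        _ = P * (J * (D * P⁻¹)) := by rw [hPA]
        _ = P * (J * D * P⁻¹) := by simp only [Matrix.mul_assoc]
        _ = P * ((t • 1 - D) * J * P⁻¹) := by rw [hJD]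
    rw [step1]
    have expand : (t • (1 : Matrix (Fin 2) (Fin 2) F) - D) * J * P⁻¹
        = t • (J * P⁻¹) - D * (J * P⁻¹) := by
      rw [Matrix.sub_mul, Matrix.sub_mul, Matrix.smul_mul, Matrix.smul_mul, Matrix.one_mul,
        Matrix.mul_assoc]
    rw [expand, Matrix.mul_sub, Matrix.sub_mul]
    congr 1
    · rw [Matrix.mul_smul, Matrix.smul_mul, Matrix.one_mul, Matrix.mul_assoc]
    · rw [← Matrix.mul_assoc P D, ← hAP]
      simp only [Matrix.mul_assoc]

lemma exists_conj (A : Matrix (Fin 2) (Fin 2) F) (hdet : det A = 1) (L M : F)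
    (hLM : L * M = 1) (hsum : L + M = trace A) (hne : L ≠ M) :
    ∃ g : Matrix (Fin 2) (Fin 2) F, det g = 1 ∧ g * A = (trace A • 1 - A) * g := by
  by_cases hb : A 0 1 ≠ 0
  · exact exists_conj_aux A hdet L M hLM hsum hne hb
  by_cases hc : A 1 0 ≠ 0
  · obtain ⟨g', hg'det, hg'⟩ := exists_conj_aux Aᵀ (by rwa [det_transpose]) L M hLM
      (by rwa [trace_transpose]) hne (by simpa using hc)
    rw [trace_transpose] at hg'
    have hgu : IsUnit (det g'ᵀ) := by rw [det_transpose, hg'det]; exact isUnit_one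
    have key : A * g'ᵀ = g'ᵀ * (trace A • 1 - A) := by
      have := congrArg Matrix.transpose hg'
      rwa [Matrix.transpose_mul, Matrix.transpose_mul, Matrix.transpose_sub,
        Matrix.transpose_smul, Matrix.transpose_one, Matrix.transpose_transpose] at this
    refine ⟨(g'ᵀ)⁻¹, by rw [det_nonsing_inv, det_transpose, hg'det, Ring.inverse_one], ?_⟩
    calc (g'ᵀ)⁻¹ * A = (g'ᵀ)⁻¹ * (A * g'ᵀ * (g'ᵀ)⁻¹) := by
          rw [Matrix.mul_assoc A, Matrix.mul_nonsing_inv _ hgu, Matrix.mul_one]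
      _ = (g'ᵀ)⁻¹ * (g'ᵀ * (trace A • 1 - A) * (g'ᵀ)⁻¹) := by rw [key]
      _ = (g'ᵀ)⁻¹ * g'ᵀ * ((trace A • 1 - A) * (g'ᵀ)⁻¹) := by simp only [Matrix.mul_assoc]
      _ = (trace A • 1 - A) * (g'ᵀ)⁻¹ := by
          rw [Matrix.nonsing_inv_mul _ hgu, Matrix.one_mul]
  · push_neg at hb hc
    refine ⟨!![0, 1; -1, 0], by simp [det_fin_two_of], ?_⟩
    have htr : trace A = A 0 0 + A 1 1 := trace_fin_two A
    ext i j
    fin_cases i <;> fin_cases j <;>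
      simp [mul_apply, Fin.sum_univ_two, Matrix.one_apply, hb, hc, htr]

lemma root_in_field [Fintype F] {K : Type*} [Field K] (f : F →+* K) (a : K)
    (ha : a ^ (Fintype.card F) = a) : ∃ c : F, f c = a := by
  set q := Fintype.card F with hq
  have h1 : 1 < q := Fintype.one_lt_card
  set P : Polynomial F := X ^ q - X with hP
  have hroots : P.roots = Finset.univ.val := FiniteField.roots_X_pow_card_sub_X F
  have hdeg : P.natDegree = q := FiniteField.X_pow_card_sub_X_natDegree_eq F h1
  have hne : P ≠ 0 := FiniteField.X_pow_card_sub_X_ne_zero F h1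
  have hsplit : P.Splits := by
    apply (Polynomial.splits_iff_card_roots).mpr
    rw [hroots, hdeg]
    exact Finset.card_univ
  have hmem : a ∈ (P.map f).roots := by
    rw [Polynomial.mem_roots']
    refine ⟨(Polynomial.map_ne_zero_iff f.injective).mpr hne, ?_⟩
    simp [hP, IsRoot, Polynomial.eval_map, Polynomial.eval₂_sub, ha]
  rw [Polynomial.Splits.roots_map hsplit f, hroots] at hmem
  obtain ⟨c, -, rfl⟩ := Multiset.mem_map.mp hmem
  exact ⟨c, rfl⟩

end PSL2Aux
section Main
open PSL2Aux Matrix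

/-- Let `ℓ ≥ 3` divide `(q-1)/gcd(2,q-1)` and let `x ∈ PSL₂(q)` have order `ℓ`.
Then the conjugacy class of `x` meets `⟨x⟩` exactly in `{x, x⁻¹}`. -/
theorem psl2_class_meet_cyclic (F : Type*) [Field F] [Fintype F]
    (ℓ : ℕ) (hℓ : 3 ≤ ℓ)
    (hdvd : ℓ ∣ (Fintype.card F - 1) / Nat.gcd 2 (Fintype.card F - 1))
    (x : Matrix.ProjectiveSpecialLinearGroup (Fin 2) F) (hx : orderOf x = ℓ) :
    {y : Matrix.ProjectiveSpecialLinearGroup (Fin 2) F | IsConj x y} ∩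
        (Subgroup.zpowers x : Set (Matrix.ProjectiveSpecialLinearGroup (Fin 2) F)) =
      {x, x⁻¹} := by
  classical
  have hq1 : 1 < Fintype.card F := Fintype.one_lt_card
  obtain ⟨B, rfl⟩ := QuotientGroup.mk_surjective x
  set q := Fintype.card F with hq
  set A : Matrix (Fin 2) (Fin 2) F := ↑B with hA
  have hdet : Matrix.det A = 1 := B.property
  set t := Matrix.trace A with ht_def
  have hch : A * A = algebraMap F (Matrix (Fin 2) (Fin 2) F) t * A - 1 := ch2 A hdet
  set K := AlgebraicClosure F with hK
  set f : F →+* K := algebraMap F K with hf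
  have hfi : Function.Injective f := f.injective
  have hscalar_eq : ∀ s : F,
      Matrix.scalar (Fin 2) s = algebraMap F (Matrix (Fin 2) (Fin 2) F) s := by
    intro s
    rw [Matrix.scalar_apply, Matrix.algebraMap_eq_diagonal]
    rfl
  -- eigenvalues
  obtain ⟨lam, hlam0⟩ : ∃ lam : K, lam * lam = f t * lam - 1 := by
    have hdeg : (Polynomial.X ^ 2 - Polynomial.C (f t) * Polynomial.X + 1 :
        Polynomial K).degree = 2 := by compute_degree!
    obtain ⟨z, hz⟩ := IsAlgClosed.exists_root
      (Polynomial.X ^ 2 - Polynomial.C (f t) * Polynomial.X + 1 : Polynomial K)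
      (by rw [hdeg]; exact (by decide : (2 : WithBot ℕ) ≠ 0))
    refine ⟨z, ?_⟩
    have hz' : z ^ 2 - f t * z + 1 = 0 := by simpa [Polynomial.IsRoot] using hz
    linear_combination hz'
  set mu : K := f t - lam with hmu_def
  have hmu0 : mu * mu = f t * mu - 1 := by rw [hmu_def]; linear_combination hlam0
  have hlm : lam * mu = 1 := by rw [hmu_def]; linear_combination -hlam0
  have hsumlm : lam + mu = f t := by rw [hmu_def]; ring
  -- power relations
  have hpowA := pow_rec t A hch
  have hpowl := pow_rec t lam hlam0
  have hpowm := pow_rec t mu hmu0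
  have htrF : ∀ n : ℕ, Matrix.trace (A ^ n) = (cc t n).1 * 2 + (cc t n).2 * t := by
    intro n
    rw [hpowA n, Matrix.trace_add, Algebra.algebraMap_eq_smul_one, Matrix.trace_smul,
      Matrix.trace_one, ← Algebra.smul_def, Matrix.trace_smul]
    simp [Fintype.card_fin]
    exact Or.inl ht_def.symm
  have htrpow : ∀ n : ℕ, f (Matrix.trace (A ^ n)) = lam ^ n + mu ^ n := by
    intro n
    rw [htrF n, _root_.map_add, _root_.map_mul, _root_.map_mul, hpowl n, hpowm n]
    have hf2 : f (2 : F) = 2 := by rw [_root_.map_ofNat]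
    rw [hf2]
    linear_combination (f ((cc t n).2)) * hsumlm
  have hprodpow : ∀ n : ℕ, lam ^ n * mu ^ n = 1 := fun n => by
    rw [← mul_pow, hlm, one_pow]
  -- B^ℓ is central
  have hxl : (QuotientGroup.mk B : Matrix.ProjectiveSpecialLinearGroup (Fin 2) F) ^ ℓ = 1 := by
    rw [← hx]; exact pow_orderOf_eq_one _
  have hBl : B ^ ℓ ∈ Subgroup.center (Matrix.SpecialLinearGroup (Fin 2) F) := by
    rw [← QuotientGroup.eq_one_iff]
    exact hxl
  obtain ⟨r0, hr0sq, hr0⟩ := Matrix.SpecialLinearGroup.mem_center_iff.mp hBl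
  have hr0two : r0 * r0 = 1 := by
    have := hr0sq; rw [Fintype.card_fin] at this; rwa [pow_two] at this
  have hcoepow : ∀ n : ℕ, ((B ^ n : Matrix.SpecialLinearGroup (Fin 2) F) :
      Matrix (Fin 2) (Fin 2) F) = A ^ n := by
    intro n
    rw [hA]
    exact Matrix.SpecialLinearGroup.coe_pow B n
  have htraceBl : Matrix.trace (A ^ ℓ) = r0 + r0 := by
    rw [← hcoepow ℓ, ← hr0, hscalar_eq, Algebra.algebraMap_eq_smul_one, Matrix.trace_smul,
      Matrix.trace_one]
    simp [Fintype.card_fin]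
    first | ring | skip
  have hfr0 : f r0 * f r0 = 1 := by rw [← _root_.map_mul, hr0two, _root_.map_one]
  have hlaml : lam ^ ℓ = f r0 := by
    have h1 : lam ^ ℓ + mu ^ ℓ = f r0 + f r0 := by
      rw [← htrpow ℓ, htraceBl, _root_.map_add]
    have h2 := hprodpow ℓ
    have h3 : (lam ^ ℓ - f r0) ^ 2 = 0 := by
      linear_combination (lam ^ ℓ) * h1 - h2 + hfr0
    have := pow_eq_zero_iff (two_ne_zero) |>.mp h3
    exact sub_eq_zero.mp this
  -- characteristic facts
  obtain ⟨nn, hpprime, hcard⟩ := FiniteField.card F (ringChar F)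
  set p := ringChar F with hp
  -- nondegeneracy: lam ≠ mu
  have hlam_ne_mu : lam ≠ mu := by
    intro hcontra
    have hl1 : lam * lam = 1 := by rw [← hlm, hcontra]
    obtain ⟨c, hcf, hc2⟩ : ∃ c : F, f c = lam ∧ c * c = 1 := by
      rcases mul_self_eq_one_iff.mp hl1 with h | h
      · exact ⟨1, by rw [_root_.map_one, h], by ring⟩
      · exact ⟨-1, by rw [_root_.map_neg, _root_.map_one, h], by ring⟩
    have htc : t = c + c := by
      apply hfi
      rw [_root_.map_add, hcf, ← hsumlm, hcontra, hmu_def]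
    set N : Matrix (Fin 2) (Fin 2) F := A - algebraMap F _ c with hN
    have hcomm : algebraMap F (Matrix (Fin 2) (Fin 2) F) c * A
        = A * algebraMap F (Matrix (Fin 2) (Fin 2) F) c := Algebra.commutes c A
    have hN2 : N * N = 0 := by
      rw [hN, Matrix.sub_mul, Matrix.mul_sub, Matrix.mul_sub, hch, ← hcomm,
        ← _root_.map_mul, hc2, _root_.map_one, htc, _root_.map_add, Matrix.add_mul]
      abel
    haveI : Fact p.Prime := ⟨hpprime⟩
    have hApow : A ^ p = algebraMap F (Matrix (Fin 2) (Fin 2) F) (c ^ p) := by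
      have hAdec : A = algebraMap F (Matrix (Fin 2) (Fin 2) F) c + N := by
        rw [hN]; abel
      have hcommN : Commute (algebraMap F (Matrix (Fin 2) (Fin 2) F) c) N :=
        Algebra.commutes c N
      haveI : CharP F p := ringChar.charP F
      rw [hAdec, add_pow_char_of_commute p hcommN, ← _root_.map_pow]
      have hNp : N ^ p = 0 := by
        have h2p : 2 ≤ p := hpprime.two_le
        calc N ^ p = N * N * N ^ (p - 2) := by
              rw [← pow_two, ← pow_add]
              congr 1
              omega
          _ = 0 := by rw [hN2, Matrix.zero_mul]
      rw [hNp, add_zero]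
    have hBp : B ^ p ∈ Subgroup.center (Matrix.SpecialLinearGroup (Fin 2) F) := by
      apply Matrix.SpecialLinearGroup.mem_center_iff.mpr
      refine ⟨c ^ p, ?_, ?_⟩
      · rw [Fintype.card_fin, ← pow_mul, mul_comm p 2, pow_mul, pow_two, hc2, one_pow]
      · rw [hscalar_eq, hcoepow, hApow]
    have hxp : (QuotientGroup.mk B : Matrix.ProjectiveSpecialLinearGroup (Fin 2) F) ^ p = 1 := by
      have h1 := (QuotientGroup.eq_one_iff (B ^ p)).mpr hBp
      rwa [QuotientGroup.mk_pow] at h1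
    have hlp : ℓ ∣ p := by rw [← hx]; exact orderOf_dvd_of_pow_eq_one hxp
    have hlP : ℓ = p := by
      rcases (Nat.Prime.eq_one_or_self_of_dvd hpprime ℓ hlp) with h | h
      · omega
      · exact h
    have hpq1 : p ∣ q - 1 := by
      refine dvd_trans ?_ (Nat.div_dvd_of_dvd (Nat.gcd_dvd_right 2 (q - 1)))
      rw [← hlP]; exact hdvd
    have hpq : p ∣ q := by
      rw [hq, hcard]
      exact dvd_pow_self p nn.ne_zero
    have : p ∣ 1 := by
      have := Nat.dvd_sub hpq hpq1
      rwa [Nat.sub_sub_self (by omega : 1 ≤ q)] at this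
    exact absurd (Nat.dvd_one.mp this) hpprime.one_lt.ne'

  have hlmne : lam - mu ≠ 0 := sub_ne_zero.mpr hlam_ne_mu
  have hcases : ∀ e u v : K, e * e = 1 → u + v = e * (lam + mu) → u * v = 1 →
      u = e * lam ∨ u = e * mu := by
    intro e u v he hs hp2
    have h0 : (u - e * lam) * (u - e * mu) = 0 := by
      linear_combination u * hs - hp2 + (lam * mu) * he + hlm
    rcases mul_eq_zero.mp h0 with h | h
    · exact Or.inl (sub_eq_zero.mp h)
    · exact Or.inr (sub_eq_zero.mp h)
  -- the forward inclusion
  have key : ∀ y : Matrix.ProjectiveSpecialLinearGroup (Fin 2) F,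
      IsConj (QuotientGroup.mk B) y → y ∈ Subgroup.zpowers (QuotientGroup.mk B) →
      y = QuotientGroup.mk B ∨ y = (QuotientGroup.mk B)⁻¹ := by
    intro y h1 h2
    obtain ⟨n, hn⟩ := Subgroup.mem_zpowers_iff.mp h2
    have hlpos : 0 < ℓ := by omega
    set m : ℕ := (n % (ℓ : ℤ)).toNat with hm
    have hmx : (QuotientGroup.mk B : Matrix.ProjectiveSpecialLinearGroup (Fin 2) F) ^ m = y := by
      have h3 := zpow_mod_orderOf (QuotientGroup.mk B :
        Matrix.ProjectiveSpecialLinearGroup (Fin 2) F) n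
      rw [hx] at h3
      rw [← hn, ← h3, hm, ← zpow_natCast,
        Int.toNat_of_nonneg (Int.emod_nonneg n (by exact_mod_cast hlpos.ne'))]
    obtain ⟨cE, hcE⟩ := isConj_iff.mp h1
    obtain ⟨Gc, rfl⟩ := QuotientGroup.mk_surjective cE
    have hmkeq : (QuotientGroup.mk (Gc * B * Gc⁻¹) :
        Matrix.ProjectiveSpecialLinearGroup (Fin 2) F) = QuotientGroup.mk (B ^ m) := by
      rw [QuotientGroup.mk_mul, QuotientGroup.mk_mul, QuotientGroup.mk_inv,
        QuotientGroup.mk_pow, hcE, hmx]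
    set z0 : Matrix.SpecialLinearGroup (Fin 2) F := (Gc * B * Gc⁻¹)⁻¹ * B ^ m with hz0def
    have hz0mem : z0 ∈ Subgroup.center (Matrix.SpecialLinearGroup (Fin 2) F) :=
      QuotientGroup.eq.mp hmkeq
    have hcomm0 : ∀ g : Matrix.SpecialLinearGroup (Fin 2) F, g * z0 = z0 * g := fun g =>
      Subgroup.mem_center_iff.mp hz0mem g
    have hBm : B ^ m = Gc * (B * z0) * Gc⁻¹ := by
      calc B ^ m = (Gc * B * Gc⁻¹) * z0 := by rw [hz0def]; group
        _ = Gc * B * (Gc⁻¹ * z0) := by rw [mul_assoc]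
        _ = Gc * B * (z0 * Gc⁻¹) := by rw [hcomm0 Gc⁻¹]
        _ = Gc * (B * z0) * Gc⁻¹ := by group
    obtain ⟨r, hrsq, hrscalar⟩ := Matrix.SpecialLinearGroup.mem_center_iff.mp hz0mem
    have hrr : r * r = 1 := by rw [Fintype.card_fin] at hrsq; rwa [pow_two] at hrsq
    have hfr : f r * f r = 1 := by rw [← _root_.map_mul, hrr, _root_.map_one]
    have hz0coe : ((z0 : Matrix.SpecialLinearGroup (Fin 2) F) : Matrix (Fin 2) (Fin 2) F)
        = algebraMap F (Matrix (Fin 2) (Fin 2) F) r := by rw [← hrscalar, hscalar_eq]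
    have hAm : A ^ m = (Gc : Matrix (Fin 2) (Fin 2) F) *
        (A * algebraMap F (Matrix (Fin 2) (Fin 2) F) r) *
        ((Gc⁻¹ : Matrix.SpecialLinearGroup (Fin 2) F) : Matrix (Fin 2) (Fin 2) F) := by
      rw [← hcoepow m, hBm]
      simp only [Matrix.SpecialLinearGroup.coe_mul]
      rw [hz0coe, ← hA]
    have hGiGm : ((Gc⁻¹ : Matrix.SpecialLinearGroup (Fin 2) F) : Matrix (Fin 2) (Fin 2) F) *
        (Gc : Matrix (Fin 2) (Fin 2) F) = 1 := by
      rw [← Matrix.SpecialLinearGroup.coe_mul, inv_mul_cancel,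
        Matrix.SpecialLinearGroup.coe_one]
    have htrm : Matrix.trace (A ^ m) = r * t := by
      rw [hAm, Matrix.trace_mul_comm, ← Matrix.mul_assoc, hGiGm, Matrix.one_mul,
        ← Algebra.commutes r A, ← Algebra.smul_def, Matrix.trace_smul, smul_eq_mul, ← ht_def]
    have hs : lam ^ m + mu ^ m = f r * (lam + mu) := by
      rw [← htrpow m, htrm, _root_.map_mul, hsumlm]
    -- central element of SL2 with matrix `algebraMap r`
    have hdetr : Matrix.det (algebraMap F (Matrix (Fin 2) (Fin 2) F) r) = 1 := by
      rw [Matrix.algebraMap_eq_diagonal, Matrix.det_diagonal]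
      have hent : ∀ i : Fin 2, (algebraMap F (Fin 2 → F) r) i = r := fun i => rfl
      rw [Fin.prod_univ_two, hent, hent]
      exact hrr
    set z1 : Matrix.SpecialLinearGroup (Fin 2) F := ⟨algebraMap F _ r, hdetr⟩ with hz1def
    have hz1mem : z1 ∈ Subgroup.center (Matrix.SpecialLinearGroup (Fin 2) F) := by
      apply Matrix.SpecialLinearGroup.mem_center_iff.mpr
      refine ⟨r, ?_, ?_⟩
      · rw [Fintype.card_fin, pow_two]; exact hrr
      · rw [hscalar_eq]
    have hmkz1 : (QuotientGroup.mk z1 : Matrix.ProjectiveSpecialLinearGroup (Fin 2) F) = 1 :=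
      (QuotientGroup.eq_one_iff z1).mpr hz1mem
    rcases hcases (f r) (lam ^ m) (mu ^ m) hfr hs (hprodpow m) with hcase | hcase
    · -- y = x
      left
      have hmum : mu ^ m = f r * mu := by
        have h1' := hprodpow m
        rw [hcase] at h1'
        have h2' : (f r * lam) * (f r * mu) = 1 := by
          calc (f r * lam) * (f r * mu) = (f r * f r) * (lam * mu) := by ring
            _ = 1 := by rw [hfr, hlm, mul_one]
        exact mul_left_cancel₀ (left_ne_zero_of_mul_eq_one h1') (h1'.trans h2'.symm)
      have hbr : (cc t m).2 = r := by
        apply hfi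
        have e1 := hpowl m; have e2 := hpowm m
        rw [hcase] at e1; rw [hmum] at e2
        have e3 : f ((cc t m).2) * (lam - mu) = f r * (lam - mu) := by
          linear_combination e2 - e1
        exact mul_right_cancel₀ hlmne e3
      have har : (cc t m).1 = 0 := by
        apply hfi
        have e1 := hpowl m
        rw [hcase, hbr] at e1
        rw [map_zero]
        linear_combination -e1
      have hAm2 : A ^ m = algebraMap F (Matrix (Fin 2) (Fin 2) F) r * A := by
        rw [hpowA m, har, hbr, map_zero, zero_add]
      have hBm2 : B ^ m = z1 * B := by
        apply Subtype.ext
        show ((B ^ m : Matrix.SpecialLinearGroup (Fin 2) F) : Matrix (Fin 2) (Fin 2) F)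
          = ((z1 * B : Matrix.SpecialLinearGroup (Fin 2) F) : Matrix (Fin 2) (Fin 2) F)
        rw [Matrix.SpecialLinearGroup.coe_mul, hcoepow m, hAm2, ← hA]
      rw [← hmx, ← QuotientGroup.mk_pow, hBm2, QuotientGroup.mk_mul, hmkz1, one_mul]
    · -- y = x⁻¹
      right
      have hmum : mu ^ m = f r * lam := by
        have h1' := hprodpow m
        rw [hcase] at h1'
        have h2' : (f r * mu) * (f r * lam) = 1 := by
          calc (f r * mu) * (f r * lam) = (f r * f r) * (lam * mu) := by ring
            _ = 1 := by rw [hfr, hlm, mul_one]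
        exact mul_left_cancel₀ (left_ne_zero_of_mul_eq_one h1') (h1'.trans h2'.symm)
      have e1 := hpowl m; have e2 := hpowm m
      rw [hcase] at e1; rw [hmum] at e2
      have hbr : (cc t m).2 = -r := by
        apply hfi
        rw [_root_.map_neg]
        have e3 : f ((cc t m).2) * (lam - mu) = (- f r) * (lam - mu) := by
          linear_combination e2 - e1
        exact mul_right_cancel₀ hlmne e3
      have hfb : f ((cc t m).2) = - f r := by rw [hbr, _root_.map_neg]
      have har : (cc t m).1 = r * t := by
        apply hfi
        rw [_root_.map_mul]
        rw [hfb] at e1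
        linear_combination -e1 + f r * hsumlm
      have hAm2 : A ^ m = algebraMap F (Matrix (Fin 2) (Fin 2) F) r *
          (algebraMap F (Matrix (Fin 2) (Fin 2) F) t - A) := by
        rw [hpowA m, har, hbr, _root_.map_neg, _root_.map_mul, Matrix.mul_sub]
        rw [neg_mul, ← sub_eq_add_neg]
      have htr2 : t = A 0 0 + A 1 1 := Matrix.trace_fin_two A
      have hadjA : Matrix.adjugate A = algebraMap F (Matrix (Fin 2) (Fin 2) F) t - A := by
        rw [Matrix.adjugate_fin_two]
        ext i j
        fin_cases i <;> fin_cases j <;>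
          simp [Matrix.algebraMap_matrix_apply, Matrix.sub_apply] <;>
          first | ring1 | linear_combination htr2 | linear_combination -htr2
      have hBm2 : B ^ m = z1 * B⁻¹ := by
        apply Subtype.ext
        show ((B ^ m : Matrix.SpecialLinearGroup (Fin 2) F) : Matrix (Fin 2) (Fin 2) F)
          = ((z1 * B⁻¹ : Matrix.SpecialLinearGroup (Fin 2) F) : Matrix (Fin 2) (Fin 2) F)
        rw [Matrix.SpecialLinearGroup.coe_mul, hcoepow m, hAm2,
          Matrix.SpecialLinearGroup.coe_inv, ← hA, hadjA]
      rw [← hmx, ← QuotientGroup.mk_pow, hBm2, QuotientGroup.mk_mul, hmkz1, one_mul,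
        QuotientGroup.mk_inv]
  -- x is conjugate to x⁻¹
  have hl_dvd_q1 : ℓ ∣ q - 1 :=
    dvd_trans hdvd (Nat.div_dvd_of_dvd (Nat.gcd_dvd_right 2 (q - 1)))
  have hlamq1 : lam ^ (q - 1) = 1 := by
    rcases Nat.Prime.eq_one_or_self_of_dvd Nat.prime_two (Nat.gcd 2 (q - 1))
      (Nat.gcd_dvd_left 2 (q - 1)) with hg | hg
    · -- gcd = 1 : q is even, characteristic 2
      have h2ndvd : ¬ (2 ∣ q - 1) := by
        intro h2
        have h3 : 2 ∣ Nat.gcd 2 (q - 1) := Nat.dvd_gcd dvd_rfl h2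
        omega
      have hqeven : 2 ∣ q := by
        rcases Nat.even_or_odd q with he | ho
        · exact he.two_dvd
        · exact absurd (Nat.Odd.sub_odd ho odd_one).two_dvd h2ndvd
      have hp2 : p = 2 := by
        have h2p : (2 : ℕ) ∣ p ^ (nn : ℕ) := by rw [← hcard, ← hq]; exact hqeven
        have h3 := Nat.Prime.dvd_of_dvd_pow Nat.prime_two h2p
        exact ((Nat.prime_dvd_prime_iff_eq Nat.prime_two hpprime).mp h3).symm
      haveI : CharP F 2 := hp2 ▸ ringChar.charP F
      have hchar2 : (2 : F) = 0 := by exact_mod_cast CharP.cast_eq_zero F 2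
      have hr01 : r0 = 1 := by
        have h4 : (r0 - 1) ^ 2 = 0 := by
          linear_combination hr0two + (1 - r0) * hchar2
        exact sub_eq_zero.mp (pow_eq_zero_iff two_ne_zero |>.mp h4)
      obtain ⟨k, hk⟩ := hl_dvd_q1
      rw [hk, pow_mul, hlaml, hr01, _root_.map_one, one_pow]
    · -- gcd = 2
      have h2dvd : 2 ∣ q - 1 := hg ▸ Nat.gcd_dvd_right 2 (q - 1)
      have h2l : 2 * ℓ ∣ q - 1 := by
        obtain ⟨k, hk⟩ := hdvd
        rw [hg] at hk
        refine ⟨k, ?_⟩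
        have h5 := Nat.mul_div_cancel' h2dvd
        rw [← h5, hk]
        ring
      obtain ⟨k, hk⟩ := h2l
      have hrw : 2 * ℓ * k = ℓ * (2 * k) := by ring
      rw [hk, hrw, pow_mul, hlaml, pow_mul, pow_two, hfr0, one_pow]
  have hlamq : lam ^ q = lam := by
    have h5 : q = (q - 1) + 1 := by omega
    rw [h5, pow_succ, hlamq1, one_mul]
  obtain ⟨cl, hcl⟩ := root_in_field f lam hlamq
  have hfMM : f (t - cl) = mu := by rw [_root_.map_sub, hcl, hmu_def]
  have hLMa : cl * (t - cl) = 1 := hfi (by rw [_root_.map_mul, hcl, hfMM, hlm, _root_.map_one])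
  have hsuma : cl + (t - cl) = Matrix.trace A := by rw [← ht_def]; ring
  have hnea : cl ≠ t - cl := fun h => hlam_ne_mu (by rw [← hcl, ← hfMM, ← h])
  obtain ⟨g, hgdet, hgA⟩ := exists_conj A hdet cl (t - cl) hLMa hsuma hnea
  have htr2 : Matrix.trace A = A 0 0 + A 1 1 := Matrix.trace_fin_two A
  have hadjA : Matrix.adjugate A
      = Matrix.trace A • (1 : Matrix (Fin 2) (Fin 2) F) - A := by
    rw [Matrix.adjugate_fin_two]
    ext i j
    fin_cases i <;> fin_cases j <;>
      simp [Matrix.sub_apply, Matrix.smul_apply, Matrix.one_apply, smul_eq_mul] <;>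
      first | ring1 | linear_combination htr2 | linear_combination -htr2
  set gS : Matrix.SpecialLinearGroup (Fin 2) F := ⟨g, hgdet⟩ with hgSdef
  have hconjSL : gS * B * gS⁻¹ = B⁻¹ := by
    have h1 : gS * B = B⁻¹ * gS := by
      apply Subtype.ext
      show ((gS * B : Matrix.SpecialLinearGroup (Fin 2) F) : Matrix (Fin 2) (Fin 2) F)
        = ((B⁻¹ * gS : Matrix.SpecialLinearGroup (Fin 2) F) : Matrix (Fin 2) (Fin 2) F)
      rw [Matrix.SpecialLinearGroup.coe_mul, Matrix.SpecialLinearGroup.coe_mul,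
        Matrix.SpecialLinearGroup.coe_inv, ← hA, hadjA]
      exact hgA
    rw [h1, mul_assoc, mul_inv_cancel, mul_one]
  have hconjPSL : IsConj (QuotientGroup.mk B :
      Matrix.ProjectiveSpecialLinearGroup (Fin 2) F) (QuotientGroup.mk B)⁻¹ := by
    have h2 : IsConj B B⁻¹ := isConj_iff.mpr ⟨gS, hconjSL⟩
    have h3 := (QuotientGroup.mk' (Subgroup.center
      (Matrix.SpecialLinearGroup (Fin 2) F))).map_isConj h2
    simpa using h3
  -- conclude
  ext y
  simp only [Set.mem_inter_iff, Set.mem_setOf_eq, SetLike.mem_coe, Set.mem_insert_iff,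
    Set.mem_singleton_iff]
  constructor
  · rintro ⟨h1, h2⟩
    exact key y h1 h2
  · rintro (rfl | rfl)
    · exact ⟨IsConj.refl _, Subgroup.mem_zpowers _⟩
    · exact ⟨hconjPSL, Subgroup.inv_mem _ (Subgroup.mem_zpowers _)⟩
end Main
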